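/- Let γ ∈ (0,1) and let (b_i)_{i=0}^{ℓ−1} be a γ-quasi-expanding string of length ℓ ≥ 2, i.e. a string of positive reals satisfying ∏_{i=1}^{k} b_{ℓ−i} ≥ γ^{−k} for all k = 1, …, ℓ. Then there exists a string of positive reals (c_i)_{i=0}^{ℓ−1} well-adapted to (b_i), meaning: ∏_{i=0}^{ℓ−1} c_i = 1; ∏_{i=0}^{k} c_i ≤ 1 for all 0 ≤ k ≤ ℓ−2; and b_i / c_i ≥ γ^{−1} for all 0 ≤ i < ℓ. Moreover one can choose (c_i) so that min{γ b_i, 1} ≤ c_i ≤ b_i for all i. -/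

import Mathlib

open Finset

/-- Liao's combinatorial lemma: a `γ`-quasi-expanding string `(b_i)_{i<ℓ}` of
positive reals (all backward partial products `∏_{i=1}^{k} b_{ℓ−i} ≥ γ^{−k}`)
admits a well-adapted string `(c_i)`: total product `1`, all initial partial
products `≤ 1`, with `b_i / c_i ≥ γ⁻¹`, and moreover
`min (γ b_i) 1 ≤ c_i ≤ b_i`. -/
theorem liao_well_adapted_string (γ : ℝ) (hγ0 : 0 < γ) (hγ1 : γ < 1)
    (ℓ : ℕ) (hℓ : 2 ≤ ℓ) (b : ℕ → ℝ) (hb : ∀ i < ℓ, 0 < b i)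
    (hquasi : ∀ k : ℕ, 1 ≤ k → k ≤ ℓ →
      γ⁻¹ ^ k ≤ ∏ i ∈ Finset.range k, b (ℓ - 1 - i)) :
    ∃ c : ℕ → ℝ, (∀ i < ℓ, 0 < c i) ∧
      (∏ i ∈ Finset.range ℓ, c i) = 1 ∧
      (∀ k : ℕ, k ≤ ℓ - 2 → (∏ i ∈ Finset.range (k + 1), c i) ≤ 1) ∧
      (∀ i < ℓ, γ⁻¹ ≤ b i / c i) ∧
      (∀ i < ℓ, min (γ * b i) 1 ≤ c i ∧ c i ≤ b i) := by
  set f : ℕ → ℝ := fun k => γ ^ k * ∏ i ∈ Finset.range k, b (ℓ - 1 - i) with hf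
  have hne : ∀ k : ℕ, (Finset.Icc (min k ℓ) ℓ).Nonempty := fun k =>
    Finset.nonempty_Icc.mpr (min_le_right _ _)
  set g : ℕ → ℝ := fun k => (Finset.Icc (min k ℓ) ℓ).inf' (hne k) f with hg
  -- basic facts about f
  have hf1 : ∀ k ≤ ℓ, 1 ≤ f k := by
    intro k hk
    rcases Nat.eq_zero_or_pos k with h0 | h1
    · simp [hf, h0]
    · have h := hquasi k h1 hk
      have hpow : (0:ℝ) < γ ^ k := pow_pos hγ0 k
      have : γ ^ k * γ⁻¹ ^ k ≤ γ ^ k * ∏ i ∈ Finset.range k, b (ℓ - 1 - i) :=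
        mul_le_mul_of_nonneg_left h hpow.le
      calc (1:ℝ) = γ ^ k * γ⁻¹ ^ k := by
            rw [← mul_pow, mul_inv_cancel₀ hγ0.ne', one_pow]
        _ ≤ f k := this
  have hf0 : ∀ k ≤ ℓ, 0 < f k := fun k hk => lt_of_lt_of_le one_pos (hf1 k hk)
  have hfstep : ∀ k < ℓ, f (k + 1) = γ * b (ℓ - 1 - k) * f k := by
    intro k hk
    simp only [hf, Finset.prod_range_succ, pow_succ]
    ring
  -- basic facts about g
  have hg1 : ∀ k, 1 ≤ g k := by
    intro k
    apply Finset.le_inf'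
    intro j hj
    exact hf1 j (Finset.mem_Icc.mp hj).2
  have hg0 : ∀ k, 0 < g k := fun k => lt_of_lt_of_le one_pos (hg1 k)
  have hgf : ∀ k ≤ ℓ, g k ≤ f k := by
    intro k hk
    apply Finset.inf'_le
    exact Finset.mem_Icc.mpr ⟨by omega, hk⟩
  have hgl : g ℓ = f ℓ := by
    have : min ℓ ℓ = ℓ := min_self ℓ
    simp [hg, this]
  have hgrec : ∀ k < ℓ, g k = min (f k) (g (k + 1)) := by
    intro k hk
    have h1 : min k ℓ = k := min_eq_left hk.le
    have h2 : min (k + 1) ℓ = k + 1 := min_eq_left hk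
    have hins : Finset.Icc k ℓ = insert k (Finset.Icc (k + 1) ℓ) := by
      ext x; simp [Finset.mem_Icc]; omega
    simp only [hg, h1, h2, hins]
    exact Finset.inf'_insert (s := Finset.Icc (k + 1) ℓ)
      (H := Finset.nonempty_Icc.mpr hk) (f := f)
  have hgmono : ∀ k < ℓ, g k ≤ g (k + 1) := by
    intro k hk; rw [hgrec k hk]; exact min_le_right _ _
  -- the string c
  set c : ℕ → ℝ := fun i => if i < ℓ then γ * b i * (g (ℓ - 1 - i) / g (ℓ - i)) else 1
    with hc
  have hcdef : ∀ i < ℓ, c i = γ * b i * (g (ℓ - 1 - i) / g (ℓ - i)) := by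
    intro i hi; simp [hc, hi]
  have hcpos : ∀ i < ℓ, 0 < c i := by
    intro i hi
    rw [hcdef i hi]
    exact mul_pos (mul_pos hγ0 (hb i hi)) (div_pos (hg0 _) (hg0 _))
  -- partial products
  have hkey : ∀ m, m ≤ ℓ → ∏ i ∈ Finset.range m, c i = g (ℓ - m) / f (ℓ - m) := by
    intro m
    induction m with
    | zero =>
        intro _
        simp [hgl, div_self (hf0 ℓ le_rfl).ne']
    | succ n ih =>
        intro h
        have hn : n < ℓ := h
        rw [Finset.prod_range_succ, ih hn.le, hcdef n hn]
        have hk1 : ℓ - n = (ℓ - 1 - n) + 1 := by omega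
        have hk2 : ℓ - (n + 1) = ℓ - 1 - n := by omega
        have hklt : ℓ - 1 - n < ℓ := by omega
        have hbn : ℓ - 1 - (ℓ - 1 - n) = n := by omega
        have hstep := hfstep (ℓ - 1 - n) hklt
        rw [hbn] at hstep
        rw [hk1, hk2, hstep]
        have h1 : f (ℓ - 1 - n) ≠ 0 := (hf0 _ (by omega)).ne'
        have h2 : g ((ℓ - 1 - n) + 1) ≠ 0 := (hg0 _).ne'
        have h3 : (γ * b n) ≠ 0 := (mul_pos hγ0 (hb n hn)).ne'
        field_simp
        rw [mul_comm (b n)]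
        exact mul_div_cancel_right₀ _ (hb n hn).ne'
  refine ⟨c, hcpos, ?_, ?_, ?_, ?_⟩
  · rw [hkey ℓ le_rfl]
    have hf00 : f 0 = 1 := by simp [hf]
    have hg00 : g 0 = 1 := le_antisymm (hf00 ▸ hgf 0 (by omega)) (hg1 0)
    simp [hf00, hg00]
  · intro k hk
    have h1 : k + 1 ≤ ℓ := by omega
    rw [hkey (k + 1) h1]
    exact div_le_one_of_le₀ (hgf _ (by omega)) (hf0 _ (by omega)).le
  · intro i hi
    have hci := hcpos i hi
    rw [le_div_iff₀ hci]
    have hcb : c i ≤ γ * b i := by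
      rw [hcdef i hi]
      have : g (ℓ - 1 - i) / g (ℓ - i) ≤ 1 := by
        rw [div_le_one (hg0 _)]
        have hk1 : ℓ - i = (ℓ - 1 - i) + 1 := by omega
        rw [hk1]
        exact hgmono _ (by omega)
      calc γ * b i * (g (ℓ - 1 - i) / g (ℓ - i)) ≤ γ * b i * 1 :=
            mul_le_mul_of_nonneg_left this (mul_pos hγ0 (hb i hi)).le
        _ = γ * b i := mul_one _
    calc γ⁻¹ * c i ≤ γ⁻¹ * (γ * b i) :=
          mul_le_mul_of_nonneg_left hcb (inv_pos.mpr hγ0).le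
      _ = b i := by field_simp
  · intro i hi
    have hcb : c i ≤ γ * b i := by
      rw [hcdef i hi]
      have : g (ℓ - 1 - i) / g (ℓ - i) ≤ 1 := by
        rw [div_le_one (hg0 _)]
        have hk1 : ℓ - i = (ℓ - 1 - i) + 1 := by omega
        rw [hk1]
        exact hgmono _ (by omega)
      calc γ * b i * (g (ℓ - 1 - i) / g (ℓ - i)) ≤ γ * b i * 1 :=
            mul_le_mul_of_nonneg_left this (mul_pos hγ0 (hb i hi)).le
        _ = γ * b i := mul_one _
    constructor
    · -- min (γ * b i) 1 ≤ c i
      have hk1 : ℓ - i = (ℓ - 1 - i) + 1 := by omega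
      have hklt : ℓ - 1 - i < ℓ := by omega
      have hbi : ℓ - 1 - (ℓ - 1 - i) = i := by omega
      have hstep := hfstep (ℓ - 1 - i) hklt
      rw [hbi] at hstep
      rw [hcdef i hi, hk1, hgrec _ hklt]
      rcases le_total (f (ℓ - 1 - i)) (g ((ℓ - 1 - i) + 1)) with hle | hle
      · rw [min_eq_left hle]
        have : (1 : ℝ) ≤ γ * b i * (f (ℓ - 1 - i) / g ((ℓ - 1 - i) + 1)) := by
          rw [mul_div_assoc'] at *
          rw [← hstep, le_div_iff₀ (hg0 _), one_mul]
          exact hgf _ (by omega)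
        exact le_trans (min_le_right _ _) this
      · rw [min_eq_right hle, div_self (hg0 _).ne', mul_one]
        exact min_le_left _ _
    · calc c i ≤ γ * b i := hcb
        _ ≤ 1 * b i := by
            apply mul_le_mul_of_nonneg_right hγ1.le (hb i hi).le
        _ = b i := one_mul _
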